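/- arXiv:1207.0703 — 3 statements merged into one kernel-verified Lean document; each statement's English description precedes it below -/
import Mathlib

section
/- Let R be a commutative Noetherian ring, I an ideal of R, and K an R-module with Supp(K) ⊆ V(I). If there exists x ∈ I such that both (0 :_K x) and K/xK are I-cofinite (i.e., Ext^j_R(R/I, −) is finitely generated for all j ≥ 0), then K is I-cofinite. -/
open Opposite CategoryTheory CategoryTheory.Limits

noncomputable section

universe u

variable (R : Type u) [CommRing R]

/-- The directed system `n ↦ M ⧸ I^n M` (contravariant in `n`). -/
def modIdealPowersDiagram (I : Ideal R) (M : Type u) [AddCommGroup M] [Module R M] :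
    ℕᵒᵖ ⥤ ModuleCat.{u} R where
  obj t := ModuleCat.of R (M ⧸ (I ^ (unop t) • ⊤ : Submodule R M))
  map w := ModuleCat.ofHom (Submodule.mapQ _ _ LinearMap.id
    (Submodule.smul_mono_left (Ideal.pow_le_pow_right w.unop.down.down)))
  map_id t := by
    ext : 1
    exact Submodule.mapQ_id _
  map_comp f g := by
    ext : 1
    simp only [ModuleCat.hom_comp, ModuleCat.hom_ofHom]
    rw [← Submodule.mapQ_comp]
    simp

/-- `H^j_I(M,N) = colim_n Ext^j_R(M/I^nM, N)`, the generalized local cohomology module. -/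
def genLocalCohomology (I : Ideal R) (M N : Type u) [AddCommGroup M] [Module R M]
    [AddCommGroup N] [Module R N] (j : ℕ) : ModuleCat.{u} R :=
  colimit ((modIdealPowersDiagram R I M).op ⋙ Ext R (ModuleCat.{u} R) j ⋙
    (evaluation (ModuleCat.{u} R) (ModuleCat.{u} R)).obj (ModuleCat.of R N))

/-- `Ext^j_R(A, B)` as an `R`-module. -/
def extModule (j : ℕ) (A B : Type u) [AddCommGroup A] [Module R A]
    [AddCommGroup B] [Module R B] : ModuleCat.{u} R :=
  ((Ext R (ModuleCat.{u} R) j).obj (op (ModuleCat.of R A))).obj (ModuleCat.of R B)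

/-- `K` is `I`-cofinite: `Supp K ⊆ V(I)` and every `Ext^j_R(R/I, K)` is finitely generated. -/
def IsCofinite (I : Ideal R) (K : Type u) [AddCommGroup K] [Module R K] : Prop :=
  Module.support R K ⊆ PrimeSpectrum.zeroLocus (I : Set R) ∧
    ∀ j : ℕ, Module.Finite R (extModule R j (R ⧸ I) K)

/-- The `I`-torsion submodule `Γ_I(N)`. -/
def gammaTorsion (I : Ideal R) (N : Type u) [AddCommGroup N] [Module R N] : Submodule R N :=
  ⨆ k : ℕ, Submodule.torsionBySet R N ((I ^ k : Ideal R) : Set R)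

/-- `I_M := ann_R(M/IM)`. -/
def idealAnnQuot (I : Ideal R) (M : Type u) [AddCommGroup M] [Module R M] : Ideal R :=
  Module.annihilator R (M ⧸ (I • ⊤ : Submodule R M))

/-- A minimax module: a f.g. submodule with Artinian quotient. -/
def IsMinimax (K : Type u) [AddCommGroup K] [Module R K] : Prop :=
  ∃ T : Submodule R K, Module.Finite R T ∧ IsArtinian R (K ⧸ T)

/-- A nontrivial module is `p`-secondary if every `a : R` acts surjectively or nilpotently
and `p = √(ann S)`. -/
def IsSecondary (p : Ideal R) (S : Type u) [AddCommGroup S] [Module R S] : Prop :=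
  Nontrivial S ∧ (∀ a : R, Function.Surjective (fun s : S => a • s) ∨
    ∃ n : ℕ, ∀ s : S, a ^ n • s = 0) ∧ p = (Module.annihilator R S).radical

/-- The attached primes of `A`: primes `p` such that `A` has a `p`-secondary quotient. -/
def attachedPrimes (A : Type u) [AddCommGroup A] [Module R A] : Set (Ideal R) :=
  { p | ∃ Q : Submodule R A, IsSecondary R p (A ⧸ Q) }

/-! ### Auxiliary machinery for Melkersson's criterion -/

namespace MelkAux

open HomologicalComplex

variable {R : Type u} [CommRing R] {X : ModuleCat.{u} R} (P : ProjectiveResolution X)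

/-- The map induced on Hom complexes, covariantly in the second module. -/
def homMap {N₁ N₂ : ModuleCat.{u} R} (f : N₁ ⟶ N₂) :
    P.complex.linearYonedaObj R N₁ ⟶ P.complex.linearYonedaObj R N₂ where
  f i := ModuleCat.ofHom (Linear.rightComp R _ f)
  comm' i j _ := by
    ext (g : P.complex.X i ⟶ N₁)
    show P.complex.d j i ≫ (g ≫ f) = (P.complex.d j i ≫ g) ≫ f
    rw [Category.assoc]

lemma homMap_comp {N₁ N₂ N₃ : ModuleCat.{u} R} (f : N₁ ⟶ N₂) (g : N₂ ⟶ N₃) :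
    homMap P (f ≫ g) = homMap P f ≫ homMap P g := by
  ext i (h : P.complex.X i ⟶ N₁)
  show h ≫ (f ≫ g) = (h ≫ f) ≫ g
  rw [Category.assoc]

/-- The short complex of Hom complexes induced by a short complex of modules. -/
def homSC (S : ShortComplex (ModuleCat.{u} R)) :
    ShortComplex (CochainComplex (ModuleCat.{u} R) ℕ) :=
  ShortComplex.mk (homMap P S.f) (homMap P S.g)
    (by rw [← homMap_comp, S.zero]; ext i (h : P.complex.X i ⟶ S.X₁)
        show h ≫ (0 : S.X₁ ⟶ S.X₃) = 0
        simp)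

lemma homSC_shortExact {S : ShortComplex (ModuleCat.{u} R)} (hS : S.ShortExact) :
    (homSC P S).ShortExact := by
  rw [HomologicalComplex.shortExact_iff_degreewise_shortExact]
  intro i
  have hmono : Mono S.f := hS.mono_f
  have hepi : Epi S.g := hS.epi_g
  haveI m : Mono ((homSC P S).map (HomologicalComplex.eval _ _ i)).f := by
    rw [ModuleCat.mono_iff_injective]
    intro g₁ g₂ h
    exact (cancel_mono S.f).mp h
  haveI e : Epi ((homSC P S).map (HomologicalComplex.eval _ _ i)).g := by
    rw [ModuleCat.epi_iff_surjective]
    intro (h : P.complex.X i ⟶ S.X₃)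
    exact ⟨Projective.factorThru h S.g, Projective.factorThru_comp h S.g⟩
  refine ⟨?_⟩
  rw [ShortComplex.moduleCat_exact_iff]
  intro (h : P.complex.X i ⟶ S.X₂) hh
  have : h ≫ S.g = 0 := hh
  obtain ⟨l, hl⟩ := KernelFork.IsLimit.lift' hS.fIsKernel h this
  exact ⟨l, hl⟩

/-- Multiplication by `x` as an endomorphism of the resolution complex. -/
def smulId (x : R) : P.complex ⟶ P.complex where
  f i := x • 𝟙 _
  comm' i j _ := by simp

/-- If `x` kills `X` then multiplication by `x` on the resolution is null-homotopic. -/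
def smulIdHomotopyZero (x : R) (hx : x • (𝟙 X) = 0) :
    Homotopy (smulId P x) 0 := by
  refine ProjectiveResolution.liftHomotopyZero _ ?_
  apply HomologicalComplex.hom_ext
  intro n
  simp only [HomologicalComplex.comp_f, HomologicalComplex.zero_f]
  obtain _ | n := n
  · apply ModuleCat.hom_ext; apply LinearMap.ext
    intro m
    show P.π.f 0 ((x • 𝟙 (P.complex.X 0)) m) = 0
    have h1 : (x • 𝟙 (P.complex.X 0)) m = x • m := rfl
    rw [h1, map_smul]
    exact LinearMap.congr_fun (congrArg ModuleCat.Hom.hom hx) (P.π.f 0 m)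
  · rw [ProjectiveResolution.π_f_succ, comp_zero]

/-- The induced homotopy on Hom complexes. -/
def homHomotopy (x : R) (hx : x • (𝟙 X) = 0) (N : ModuleCat.{u} R) :
    Homotopy (homMap P (x • 𝟙 N)) 0 := by
  let H := smulIdHomotopyZero P x hx
  exact {
    hom := fun i j => ModuleCat.ofHom (Linear.leftComp R N (H.hom j i))
    zero := fun i j hij => by
      have h0 : H.hom j i = 0 := H.zero j i (by simpa using hij)
      apply ModuleCat.hom_ext; apply LinearMap.ext
      intro (g : P.complex.X i ⟶ N)
      show H.hom j i ≫ g = 0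
      rw [h0, zero_comp]
    comm := fun i => by
      have e1 := @Homotopy.dNext_cochainComplex (ModuleCat.{u} R) _ _
        (P.complex.linearYonedaObj R N) (P.complex.linearYonedaObj R N)
        (fun i j => ModuleCat.ofHom (Linear.leftComp R N (H.hom j i))) i
      have e2 := prevD_nat (P.complex.linearYonedaObj R N) (P.complex.linearYonedaObj R N) i
        (fun i j => ModuleCat.ofHom (Linear.leftComp R N (H.hom j i)))
      rw [e1, e2]
      have hcomm := H.comm i
      rw [dNext_nat, Homotopy.prevD_chainComplex] at hcomm
      apply ModuleCat.hom_ext; apply LinearMap.ext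
      intro (g : P.complex.X i ⟶ N)
      show g ≫ (x • 𝟙 N) =
        (H.hom i (i+1) ≫ (P.complex.d (i+1) i ≫ g)) +
          ((P.complex.d i (i-1)) ≫ (H.hom (i-1) i ≫ g)) + 0
      have l : g ≫ (x • 𝟙 N) = (x • 𝟙 (P.complex.X i)) ≫ g := by
        rw [Linear.comp_smul, Linear.smul_comp, Category.comp_id, Category.id_comp]
      rw [l]
      have r : (x • 𝟙 (P.complex.X i)) = (smulId P x).f i := rfl
      rw [r, hcomm]
      simp only [HomologicalComplex.zero_f, add_zero, Preadditive.add_comp, Category.assoc]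
      rw [add_comm] }

lemma homologyMap_homMap_smul (x : R) (hx : x • (𝟙 X) = 0) (N : ModuleCat.{u} R) (j : ℕ) :
    HomologicalComplex.homologyMap (homMap P (x • 𝟙 N)) j = 0 := by
  rw [(homHomotopy P x hx N).homologyMap_eq j, HomologicalComplex.homologyMap_zero]

open LinearMap in
lemma melk_alg {R : Type u} [CommRing R] [IsNoetherianRing R]
    {E EM EL EC : Type u} [AddCommGroup E] [Module R E] [AddCommGroup EM] [Module R EM]
    [AddCommGroup EL] [Module R EL] [AddCommGroup EC] [Module R EC]
    (β : E →ₗ[R] EM) (δ : EM →ₗ[R] EL) (α : EM →ₗ[R] E) (γ : E →ₗ[R] EC)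
    (hβδ : range β = ker δ) (hαγ : range α = ker γ)
    (hcomp : ∀ e, α (β e) = 0)
    [Module.Finite R EL] [Module.Finite R EC] : Module.Finite R E := by
  haveI : IsNoetherian R EL := isNoetherian_of_isNoetherianRing_of_finite R EL
  haveI : IsNoetherian R EC := isNoetherian_of_isNoetherianRing_of_finite R EC
  have h1 : ker δ ≤ ker α := by
    rw [← hβδ]; rintro _ ⟨e, rfl⟩; exact hcomp e
  haveI : Module.Finite R ↥(range δ) := Module.Finite.iff_fg.mpr (IsNoetherian.noetherian _)
  haveI : Module.Finite R (EM ⧸ ker δ) := Module.Finite.equiv δ.quotKerEquivRange.symm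
  have hfgα : (range α).FG := by
    rw [← Submodule.range_liftQ (ker δ) α h1, ← Submodule.map_top]
    exact Submodule.FG.map _ (Module.finite_def.mp inferInstance)
  haveI : Module.Finite R ↥(range γ) := Module.Finite.iff_fg.mpr (IsNoetherian.noetherian _)
  haveI hq : Module.Finite R (E ⧸ ker γ) := Module.Finite.equiv γ.quotKerEquivRange.symm
  rw [Module.finite_def]
  apply Submodule.fg_of_fg_map_of_fg_inf_ker (ker γ).mkQ
  · rw [Submodule.map_top, Submodule.range_mkQ]
    exact Module.finite_def.mp hq
  · rw [top_inf_eq, Submodule.ker_mkQ, ← hαγ]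
    exact hfgα

end MelkAux

/-- Melkersson's criterion: if `x ∈ I` and both `(0 :_K x)` and `K/xK` are `I`-cofinite,
and `Supp K ⊆ V(I)`, then `K` is `I`-cofinite. -/
theorem stmt0 [IsNoetherianRing R] (I : Ideal R) (K : Type u) [AddCommGroup K] [Module R K]
    (hsupp : Module.support R K ⊆ PrimeSpectrum.zeroLocus (I : Set R))
    (x : R) (hx : x ∈ I)
    (h1 : IsCofinite R I (LinearMap.ker (LinearMap.lsmul R K x)))
    (h2 : IsCofinite R I (K ⧸ LinearMap.range (LinearMap.lsmul R K x))) :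
    IsCofinite R I K := by
  classical
  refine ⟨hsupp, fun j => ?_⟩
  set f : K →ₗ[R] K := LinearMap.lsmul R K x with hf
  let XI : ModuleCat.{u} R := ModuleCat.of R (R ⧸ I)
  let P : ProjectiveResolution XI := ProjectiveResolution.of XI
  let KC : ModuleCat.{u} R := ModuleCat.of R K
  let LC : ModuleCat.{u} R := ModuleCat.of R ↥(LinearMap.ker f)
  let MC : ModuleCat.{u} R := ModuleCat.of R ↥(LinearMap.range f)
  let CC : ModuleCat.{u} R := ModuleCat.of R (K ⧸ LinearMap.range f)
  -- the two short exact sequences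
  let S1 : ShortComplex (ModuleCat.{u} R) := ShortComplex.mk
    (ModuleCat.ofHom (LinearMap.ker f).subtype) (ModuleCat.ofHom f.rangeRestrict)
    (by apply ModuleCat.hom_ext; apply LinearMap.ext; rintro ⟨m, hm⟩; exact Subtype.ext hm)
  let S2 : ShortComplex (ModuleCat.{u} R) := ShortComplex.mk
    (ModuleCat.ofHom (LinearMap.range f).subtype) (ModuleCat.ofHom (LinearMap.range f).mkQ)
    (by apply ModuleCat.hom_ext; apply LinearMap.ext; rintro ⟨m, hm⟩
        exact (Submodule.Quotient.mk_eq_zero _).mpr hm)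
  have hS1 : S1.ShortExact := by
    haveI : Mono S1.f := (ModuleCat.mono_iff_injective _).mpr (Submodule.injective_subtype _)
    haveI : Epi S1.g := (ModuleCat.epi_iff_surjective _).mpr f.surjective_rangeRestrict
    refine ⟨?_⟩
    rw [ShortComplex.moduleCat_exact_iff_range_eq_ker]
    show LinearMap.range (LinearMap.ker f).subtype = LinearMap.ker f.rangeRestrict
    rw [Submodule.range_subtype, LinearMap.ker_rangeRestrict]
  have hS2 : S2.ShortExact := by
    haveI : Mono S2.f := (ModuleCat.mono_iff_injective _).mpr (Submodule.injective_subtype _)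
    haveI : Epi S2.g := (ModuleCat.epi_iff_surjective _).mpr (Submodule.mkQ_surjective _)
    refine ⟨?_⟩
    rw [ShortComplex.moduleCat_exact_iff_range_eq_ker]
    show LinearMap.range (LinearMap.range f).subtype = LinearMap.ker (LinearMap.range f).mkQ
    rw [Submodule.range_subtype, Submodule.ker_mkQ]
  -- x kills R/I
  have hxX : x • (𝟙 XI) = 0 := by
    apply ModuleCat.hom_ext; apply LinearMap.ext
    intro z
    obtain ⟨y, rfl⟩ := Submodule.Quotient.mk_surjective I z
    have hz : (x • 𝟙 XI) (Submodule.Quotient.mk y) = x • (Submodule.Quotient.mk y : R ⧸ I) := rfl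
    have hz0 : (0 : XI ⟶ XI) (Submodule.Quotient.mk y) = 0 := rfl
    rw [hz, hz0, ← Submodule.Quotient.mk_smul]
    exact (Submodule.Quotient.mk_eq_zero _).mpr (by simpa [smul_eq_mul] using I.mul_mem_right y hx)
  -- composite K → M → K is multiplication by x
  have hgf : S1.g ≫ S2.f = x • 𝟙 KC := by
    apply ModuleCat.hom_ext; apply LinearMap.ext
    intro m
    rfl
  -- the short exact sequences of Hom complexes
  have hSC1 := MelkAux.homSC_shortExact P hS1
  have hSC2 := MelkAux.homSC_shortExact P hS2
  have hrel : (ComplexShape.up ℕ).Rel j (j+1) := rfl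
  have hex1 := (hSC1.homology_exact₃ j (j+1) hrel)
  have hex2 := (hSC2.homology_exact₂ j)
  rw [ShortComplex.moduleCat_exact_iff_range_eq_ker] at hex1 hex2
  -- the composite on homology is zero
  have hcomp0 : HomologicalComplex.homologyMap (MelkAux.homSC P S1).g j ≫
      HomologicalComplex.homologyMap (MelkAux.homSC P S2).f j = 0 := by
    refine Eq.trans (HomologicalComplex.homologyMap_comp (MelkAux.homSC P S1).g (MelkAux.homSC P S2).f j).symm ?_
    have e : (MelkAux.homSC P S1).g ≫ (MelkAux.homSC P S2).f =
        MelkAux.homMap P (x • 𝟙 KC) := by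
      show MelkAux.homMap P S1.g ≫ MelkAux.homMap P S2.f = _
      rw [← MelkAux.homMap_comp, hgf]
    rw [e]; exact MelkAux.homologyMap_homMap_smul P x hxX KC j
  -- finiteness of the outer terms
  haveI hfL : Module.Finite R ↥((MelkAux.homSC P S1).X₁.homology (j+1)) := by
    haveI := h1.2 (j+1)
    exact (Module.Finite.equiv_iff (P.isoExt (j+1) LC).toLinearEquiv).mp (h1.2 (j+1))
  haveI hfC : Module.Finite R ↥((MelkAux.homSC P S2).X₃.homology j) := by
    haveI := h2.2 j
    exact (Module.Finite.equiv_iff (P.isoExt j CC).toLinearEquiv).mp (h2.2 j)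
  -- conclude by the sandwich lemma
  haveI hK : Module.Finite R ↥((MelkAux.homSC P S1).X₂.homology j) :=
    MelkAux.melk_alg
      (HomologicalComplex.homologyMap (MelkAux.homSC P S1).g j).hom
      (hSC1.δ j (j+1) hrel).hom
      (HomologicalComplex.homologyMap (MelkAux.homSC P S2).f j).hom
      (HomologicalComplex.homologyMap (MelkAux.homSC P S2).g j).hom
      (by exact hex1) (by exact hex2) (fun e => by exact LinearMap.congr_fun (congrArg ModuleCat.Hom.hom hcomp0) e)
  exact (Module.Finite.equiv_iff (P.isoExt j KC).toLinearEquiv.symm).mp hK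


end
end

section
/- Let R be a commutative Noetherian ring, I an ideal, and A an Artinian R-module. If (0 :_A I) is a finitely generated R-module, then I is not contained in any non-maximal attached prime of A; that is, I ⊄ p for every p ∈ Att(A) \ Max(R). -/
open Opposite CategoryTheory CategoryTheory.Limits

noncomputable section

universe u

variable (R : Type u) [CommRing R]

/-- Melkersson's lemma: if `(0 :_A I)` is a Noetherian module over a Noetherian ring, then
so is `(0 :_A I^n)` for every `n`. -/
theorem aux_torsion_pow_noetherian [IsNoetherianRing R] (I : Ideal R) (A : Type u)
    [AddCommGroup A] [Module R A]
    (hfg : Module.Finite R (Submodule.torsionBySet R A (I : Set R))) (n : ℕ) :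
    IsNoetherian R (Submodule.torsionBySet R A ((I ^ n : Ideal R) : Set R)) := by
  induction n with
  | zero =>
    have hbot : Submodule.torsionBySet R A ((I ^ 0 : Ideal R) : Set R) = ⊥ := by
      apply le_antisymm _ bot_le
      intro x hx
      rw [Submodule.mem_torsionBySet_iff] at hx
      have h1 : (1 : R) ∈ ((I ^ 0 : Ideal R) : Set R) := by
        simp [Ideal.one_eq_top]
      have := hx ⟨1, h1⟩
      simpa using this
    rw [hbot]
    infer_instance
  | succ n ih =>
    haveI hT1 : IsNoetherian R (Submodule.torsionBySet R A (I : Set R)) :=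
      isNoetherian_of_isNoetherianRing_of_finite R _
    obtain ⟨s, hs⟩ : I.FG := IsNoetherian.noetherian I
    set Fn := Submodule.torsionBySet R A ((I ^ n : Ideal R) : Set R) with hFn
    set Fn1 := Submodule.torsionBySet R A ((I ^ (n + 1) : Ideal R) : Set R) with hFn1
    have hle : Submodule.torsionBySet R A (I : Set R) ≤ Fn1 :=
      Submodule.torsionBySet_le_torsionBySet_of_subset
        (Ideal.pow_le_self (Nat.succ_ne_zero n))
    -- the map x ↦ (a • x)_{a ∈ s}
    have hmapsto : ∀ (a : R), a ∈ I → ∀ x : A, x ∈ Fn1 → a • x ∈ Fn := by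
      intro a ha x hx
      rw [Submodule.mem_torsionBySet_iff]
      rintro ⟨b, hb⟩
      have hmem : b * a ∈ (I ^ (n + 1) : Ideal R) := by
        rw [pow_succ]
        exact Ideal.mul_mem_mul hb ha
      have := (Submodule.mem_torsionBySet_iff _ _).mp hx ⟨b * a, hmem⟩
      rwa [mul_smul] at this
    let g : Fn1 →ₗ[R] ({ x : R // x ∈ s } → Fn) :=
      LinearMap.pi fun a => LinearMap.codRestrict Fn
        ((LinearMap.lsmul R A (a : R)).comp Fn1.subtype)
        (fun x => hmapsto a (hs ▸ Ideal.subset_span (by simpa using a.2)) x.1 x.2)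
    let f : (Submodule.torsionBySet R A (I : Set R)) →ₗ[R] Fn1 := Submodule.inclusion hle
    have hrk : LinearMap.range f = LinearMap.ker g := by
      apply le_antisymm
      · rintro _ ⟨x, rfl⟩
        ext a
        have hx := (Submodule.mem_torsionBySet_iff _ _).mp x.2
          ⟨(a : R), hs ▸ Ideal.subset_span (by simpa using a.2)⟩
        exact hx
      · intro x hx
        have hxt : (x : A) ∈ Submodule.torsionBySet R A (I : Set R) := by
          rw [← hs, ← Submodule.torsionBySet_eq_torsionBySet_span,
            Submodule.mem_torsionBySet_iff]
          rintro ⟨a, ha⟩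
          have := congrFun (LinearMap.mem_ker.mp hx) ⟨a, ha⟩
          exact congrArg Subtype.val this
        exact ⟨⟨(x : A), hxt⟩, rfl⟩
    haveI : IsNoetherian R ({ x : R // x ∈ s } → Fn) := by
      haveI := ih
      infer_instance
    exact isNoetherian_of_range_eq_ker f g hrk

/-- If `A` is Artinian and `(0 :_A I)` is finitely generated, then `I` is not contained in any
non-maximal attached prime of `A`. -/
theorem stmt2 [IsNoetherianRing R] (I : Ideal R) (A : Type u) [AddCommGroup A] [Module R A]
    [IsArtinian R A]
    (hfg : Module.Finite R (Submodule.torsionBySet R A (I : Set R))) :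
    ∀ p ∈ attachedPrimes R A, ¬ p.IsMaximal → ¬ I ≤ p := by
  rintro p ⟨Q, hnt, hdich, hrad⟩ hpmax hIp
  haveI := hnt
  -- `p` is a proper ideal
  have hpne : p ≠ ⊤ := by
    intro h
    have h1 : (1 : R) ∈ p := h ▸ Submodule.mem_top
    rw [hrad, Ideal.mem_radical_iff] at h1
    obtain ⟨n, hn⟩ := h1
    rw [one_pow] at hn
    obtain ⟨x, y, hxy⟩ := hnt
    apply hxy
    have hx := Module.mem_annihilator.mp hn x
    have hy := Module.mem_annihilator.mp hn y
    rw [one_smul] at hx hy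
    rw [hx, hy]
  obtain ⟨m, hm, hpm⟩ := Ideal.exists_le_maximal p hpne
  have hplt : p < m := lt_of_le_of_ne hpm (fun h => hpmax (h ▸ hm))
  obtain ⟨a, ham, hap⟩ := SetLike.exists_of_lt hplt
  -- a minimal submodule `A₁` with `A₁ ⊔ Q = ⊤`
  obtain ⟨A₁, hA₁mem, hA₁min⟩ :=
    IsArtinian.set_has_minimal (R := R) (M := A) {A' : Submodule R A | A' ⊔ Q = ⊤}
      ⟨⊤, by simp⟩
  have htop : ∀ x : A, x ∈ A₁ ⊔ Q := by
    intro x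
    rw [hA₁mem]; exact Submodule.mem_top
  -- every element of `I` acts nilpotently on `A₁`
  have hnil : ∀ b ∈ I, ∃ k : ℕ, ∀ x ∈ A₁, b ^ k • x = 0 := by
    intro b hb
    have hbp : b ∈ p := hIp hb
    rw [hrad, Ideal.mem_radical_iff] at hbp
    obtain ⟨u, hu⟩ := hbp
    have huQ : ∀ x : A, b ^ u • x ∈ Q := by
      intro x
      have := Module.mem_annihilator.mp hu (Submodule.Quotient.mk (p := Q) x)
      rwa [← Submodule.Quotient.mk_smul, Submodule.Quotient.mk_eq_zero] at this
    set N : ℕ → Submodule R A := fun n => Submodule.map (LinearMap.lsmul R A (b ^ n)) A₁ with hN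
    have hNanti : ∀ {i j : ℕ}, i ≤ j → N j ≤ N i := by
      intro i j hij
      rintro _ ⟨x, hx, rfl⟩
      refine ⟨b ^ (j - i) • x, A₁.smul_mem _ hx, ?_⟩
      simp only [LinearMap.lsmul_apply, smul_smul, ← pow_add]
      rw [Nat.add_sub_cancel' hij]
    obtain ⟨_, ⟨k, hk, rfl⟩, hkmin⟩ :=
      IsArtinian.set_has_minimal (R := R) (M := A) {P | ∃ n : ℕ, u ≤ n ∧ N n = P}
        ⟨N u, u, le_refl u, rfl⟩
    have hstab : N (2 * k) = N k := by
      have hle2 : N (2 * k) ≤ N k := hNanti (by omega)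
      have := hkmin (N (2 * k)) ⟨2 * k, by omega, rfl⟩
      exact le_antisymm hle2 (by
        rcases lt_or_eq_of_le hle2 with h | h
        · exact absurd h this
        · exact h.ge)
    refine ⟨k, ?_⟩
    set K := LinearMap.ker (LinearMap.lsmul R A (b ^ k)) ⊓ A₁ with hK
    have hsub : A₁ ≤ K ⊔ N k := by
      intro x hx
      have hbx : b ^ k • x ∈ N k := ⟨x, hx, rfl⟩
      rw [← hstab] at hbx
      obtain ⟨y, hy, hxy⟩ := hbx
      simp only [LinearMap.lsmul_apply] at hxy
      refine Submodule.mem_sup.mpr ⟨x - b ^ k • y, Submodule.mem_inf.mpr ⟨?_, ?_⟩,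
        b ^ k • y, ⟨y, hy, rfl⟩, by abel⟩
      · rw [LinearMap.mem_ker]
        simp only [LinearMap.lsmul_apply, smul_sub, smul_smul, ← pow_add]
        rw [← hxy]
        rw [two_mul]
        abel
      · exact A₁.sub_mem hx (A₁.smul_mem _ hy)
    have hNkQ : N k ≤ Q := by
      rintro _ ⟨x, hx, rfl⟩
      simp only [LinearMap.lsmul_apply]
      have : b ^ k • x = b ^ (k - u) • (b ^ u • x) := by
        rw [smul_smul, ← pow_add, Nat.sub_add_cancel hk]
      rw [this]
      exact Q.smul_mem _ (huQ x)
    have hKtop : K ⊔ Q = ⊤ := by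
      apply le_antisymm le_top
      calc (⊤ : Submodule R A) = A₁ ⊔ Q := hA₁mem.symm
        _ ≤ (K ⊔ N k) ⊔ Q := sup_le_sup_right hsub Q
        _ = K ⊔ (N k ⊔ Q) := sup_assoc ..
        _ ≤ K ⊔ Q := sup_le_sup_left (sup_le hNkQ le_rfl) K
    have hKA₁ : K = A₁ := by
      have hKle : K ≤ A₁ := inf_le_right
      have := hA₁min K hKtop
      rcases lt_or_eq_of_le hKle with h | h
      · exact absurd h this
      · exact h
    intro x hx
    have : x ∈ K := hKA₁ ▸ hx
    have hker := (Submodule.mem_inf.mp this).1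
    rw [LinearMap.mem_ker] at hker
    simpa using hker
  -- `a` acts surjectively on `A₁`
  have hsurj : Submodule.map (LinearMap.lsmul R A a) A₁ = A₁ := by
    set N1 := Submodule.map (LinearMap.lsmul R A a) A₁ with hN1
    have hle : N1 ≤ A₁ := by
      rintro _ ⟨x, hx, rfl⟩; exact A₁.smul_mem a hx
    have hsa : Function.Surjective fun s : A ⧸ Q => a • s := by
      rcases hdich a with h | h
      · exact h
      · exfalso
        apply hap
        rw [hrad, Ideal.mem_radical_iff]
        obtain ⟨n, hn⟩ := h
        exact ⟨n, Module.mem_annihilator.mpr hn⟩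
    have hmem : N1 ⊔ Q = ⊤ := by
      apply le_antisymm le_top
      intro x _
      obtain ⟨x₁, hx₁, q, hq, rfl⟩ := Submodule.mem_sup.mp (htop x)
      obtain ⟨s, hs⟩ := hsa (Submodule.Quotient.mk x₁)
      obtain ⟨y, rfl⟩ := Submodule.Quotient.mk_surjective Q s
      have hyQ : a • y - x₁ ∈ Q := by
        rw [← Submodule.Quotient.mk_eq_zero, Submodule.Quotient.mk_sub]
        have hs' : a • (Submodule.Quotient.mk (p := Q) y) = Submodule.Quotient.mk x₁ := hs
        rw [← Submodule.Quotient.mk_smul] at hs'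
        rw [hs', sub_self]
      obtain ⟨y₁, hy₁, q', hq', hyeq⟩ := Submodule.mem_sup.mp (htop y)
      apply Submodule.mem_sup.mpr
      refine ⟨a • y₁, ⟨y₁, hy₁, rfl⟩, a • q' - (a • y - x₁) + q, ?_, ?_⟩
      · exact Q.add_mem (Q.sub_mem (Q.smul_mem a hq') hyQ) hq
      · rw [← hyeq]
        simp only [smul_add]
        abel
    have := hA₁min N1 hmem
    rcases lt_or_eq_of_le hle with h | h
    · exact absurd h this
    · exact h
  -- `I^t` kills `A₁`, so `A₁` is contained in a f.g. torsion submodule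
  have hIrad : I ≤ (A₁.annihilator).radical := by
    intro b hb
    obtain ⟨k, hk⟩ := hnil b hb
    exact Ideal.mem_radical_iff.mpr ⟨k, Submodule.mem_annihilator.mpr hk⟩
  obtain ⟨t, ht⟩ := Ideal.exists_pow_le_of_le_radical_of_fg hIrad (IsNoetherian.noetherian I)
  have hA₁F : A₁ ≤ Submodule.torsionBySet R A ((I ^ t : Ideal R) : Set R) := by
    intro x hx
    rw [Submodule.mem_torsionBySet_iff]
    rintro ⟨b, hb⟩
    exact Submodule.mem_annihilator.mp (ht hb) x hx
  haveI := aux_torsion_pow_noetherian R I A hfg t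
  set Ft := Submodule.torsionBySet R A ((I ^ t : Ideal R) : Set R) with hFt
  have hA₁fg : A₁.FG := by
    have h1 : (Submodule.comap Ft.subtype A₁).FG := IsNoetherian.noetherian _
    have h2 := h1.map Ft.subtype
    rwa [Submodule.map_comap_subtype, inf_eq_right.mpr hA₁F] at h2
  -- Nakayama
  have hlesmul : A₁ ≤ m • A₁ := by
    intro x hx
    rw [← hsurj] at hx
    obtain ⟨y, hy, rfl⟩ := hx
    exact Submodule.smul_mem_smul ham hy
  obtain ⟨r, hr1, hr0⟩ :=
    Submodule.exists_sub_one_mem_and_smul_eq_zero_of_fg_of_le_smul m A₁ hA₁fg hlesmul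
  -- `r` kills `A ⧸ Q`, hence lies in `p ≤ m`; contradiction
  have hrann : r ∈ Module.annihilator R (A ⧸ Q) := by
    rw [Module.mem_annihilator]
    intro s
    obtain ⟨x, rfl⟩ := Submodule.Quotient.mk_surjective Q s
    obtain ⟨x₁, hx₁, q, hq, rfl⟩ := Submodule.mem_sup.mp (htop x)
    rw [← Submodule.Quotient.mk_smul, Submodule.Quotient.mk_eq_zero, smul_add,
      hr0 x₁ hx₁, zero_add]
    exact Q.smul_mem r hq
  have hrp : r ∈ p := by
    rw [hrad]
    exact Ideal.le_radical hrann
  have hone : (1 : R) ∈ m := by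
    have := m.sub_mem (hpm hrp) hr1
    rwa [sub_sub_cancel] at this
  exact hm.ne_top ((Ideal.eq_top_iff_one m).mpr hone)

end
end

section
/- Let R be a commutative Noetherian ring, I an ideal, M, N finitely generated R-modules, and t a non-negative integer. Then Hom_R(R/I, H^t_I(M,N)) is finitely generated if and only if Hom_R(R/I_M, H^t_I(M,N)) is finitely generated, where I_M = ann_R(M/IM). -/
open Opposite CategoryTheory CategoryTheory.Limits

noncomputable section

universe u

variable (R : Type u) [CommRing R]

section AuxAlg
variable {R : Type u} [CommRing R]


/-- Evaluation at `1` identifies `Hom(R/K, H)` with the `K`-torsion of `H`. -/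
def homQuotEquivTorsion (K : Ideal R) (H : Type u) [AddCommGroup H] [Module R H] :
    ((R ⧸ K) →ₗ[R] H) ≃ₗ[R] Submodule.torsionBySet R H (K : Set R) where
  toFun φ := ⟨φ 1, (Submodule.mem_torsionBySet_iff _ _).2 (fun a => by
    rw [← map_smul]
    convert map_zero φ
    have : ((a : R) • (1 : R ⧸ K)) = Submodule.Quotient.mk ((a:R) • (1:R)) := by
      rw [Submodule.Quotient.mk_smul]; rfl
    rw [this, smul_eq_mul, mul_one]
    rw [show (Submodule.Quotient.mk ((a:R)) : R ⧸ K) = Ideal.Quotient.mk K (a:R) from rfl,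
      Ideal.Quotient.eq_zero_iff_mem]
    exact a.2)⟩
  map_add' φ ψ := by ext; simp
  map_smul' a φ := by ext; simp
  invFun x := Submodule.liftQ K (LinearMap.toSpanSingleton R H (x : H))
    (fun a ha => by
      simp only [LinearMap.mem_ker, LinearMap.toSpanSingleton_apply]
      exact (Submodule.mem_torsionBySet_iff _ _).1 x.2 ⟨a, ha⟩)
  left_inv φ := by
    apply LinearMap.ext
    intro y
    obtain ⟨a, rfl⟩ := Submodule.Quotient.mk_surjective _ y
    show a • φ 1 = _
    rw [← map_smul]
    congr 1
    show a • Submodule.Quotient.mk (1 : R) = _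
    rw [← Submodule.Quotient.mk_smul, smul_eq_mul, mul_one]
  right_inv x := by
    ext
    show (1 : R) • (x : H) = x
    rw [one_smul]

lemma fg_of_le_fg {A : Type u} [AddCommGroup A] [Module R A] [IsNoetherianRing R]
    {p q : Submodule R A} (hp : p.FG) (h : q ≤ p) : q.FG := by
  have : IsNoetherian R p := isNoetherian_of_fg_of_noetherian p hp
  have h1 : (q.comap p.subtype).FG := IsNoetherian.noetherian _
  have h2 := h1.map p.subtype
  rwa [Submodule.map_comap_subtype, inf_of_le_right h] at h2

lemma torsionBySet_pow_fg [IsNoetherianRing R] {H : Type u} [AddCommGroup H] [Module R H]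
    (J : Ideal R) (hfg : (Submodule.torsionBySet R H (J : Set R)).FG) (k : ℕ) :
    (Submodule.torsionBySet R H ((J ^ k : Ideal R) : Set R)).FG := by
  induction k with
  | zero =>
    have : Submodule.torsionBySet R H ((J ^ 0 : Ideal R) : Set R) = ⊥ := by
      rw [eq_bot_iff]
      intro x hx
      have := (Submodule.mem_torsionBySet_iff _ _).1 hx
        ⟨1, by simp [pow_zero, Ideal.one_eq_top]⟩
      simpa using this
    rw [this]; exact Submodule.fg_bot
  | succ k ih =>
    obtain ⟨s, hs⟩ : J.FG := IsNoetherian.noetherian J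
    set Tk := Submodule.torsionBySet R H ((J ^ k : Ideal R) : Set R) with hTk
    set T := Submodule.torsionBySet R H ((J ^ (k+1) : Ideal R) : Set R) with hT
    -- the map x ↦ (a • x)ₐ for a in s
    set f : H →ₗ[R] ({x // x ∈ s} → H) := LinearMap.pi (fun i => (i : R) • LinearMap.id) with hf
    apply Submodule.fg_of_fg_map_of_fg_inf_ker f
    · -- image is contained in a f.g. submodule
      have hTkfin : Module.Finite R Tk := Module.Finite.iff_fg.2 ih
      set g : ({x // x ∈ s} → Tk) →ₗ[R] ({x // x ∈ s} → H) :=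
        LinearMap.pi (fun i => Tk.subtype ∘ₗ LinearMap.proj i) with hg
      have hrange : T.map f ≤ LinearMap.range g := by
        rintro _ ⟨x, hx, rfl⟩
        refine ⟨fun i => ⟨(i : R) • x, ?_⟩, rfl⟩
        · refine (Submodule.mem_torsionBySet_iff _ _).2 (fun a => ?_)
          have : ((a : R) * (i : R)) ∈ (J ^ (k+1) : Ideal R) := by
            rw [pow_succ]
            exact Ideal.mul_mem_mul a.2 (hs ▸ Submodule.subset_span i.2)
          have h0 := (Submodule.mem_torsionBySet_iff _ _).1 hx ⟨_, this⟩
          rw [smul_smul]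
          exact h0
      have : Module.Finite R ({x // x ∈ s} → Tk) := Module.Finite.pi
      have hgfg : (LinearMap.range g).FG := Module.Finite.iff_fg.1 (Module.Finite.range g)
      exact fg_of_le_fg hgfg hrange
    · refine fg_of_le_fg hfg ?_
      rintro x ⟨-, hker⟩
      refine (Submodule.mem_torsionBySet_iff _ _).2 (fun a => ?_)
      have hx : ∀ i : {x // x ∈ s}, (i : R) • x = 0 := fun i => congrFun hker i
      have : ∀ a ∈ J, a • x = 0 := by
        intro a ha
        rw [← hs] at ha
        induction ha using Submodule.span_induction with
        | mem b hb => exact hx ⟨b, hb⟩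
        | zero => simp
        | add b c _ _ hb hc => rw [add_smul, hb, hc, add_zero]
        | smul r b _ hb => rw [smul_eq_mul, mul_smul, hb, smul_zero]
      exact this a a.2

/-- Determinant trick: elements of `ann(M/IM)` are in the radical of `I + ann M`. -/
lemma annQuot_le_radical {M : Type u} [AddCommGroup M] [Module R M] [Module.Finite R M]
    (I : Ideal R) {a : R} (ha : a ∈ Module.annihilator R (M ⧸ (I • ⊤ : Submodule R M))) :
    ∃ d : ℕ, a ^ d ∈ I ⊔ Module.annihilator R M := by
  have hrange : LinearMap.range (a • (LinearMap.id : M →ₗ[R] M)) ≤ I • ⊤ := by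
    rintro _ ⟨m, rfl⟩
    have := Module.mem_annihilator.1 ha (Submodule.Quotient.mk m)
    rwa [← Submodule.Quotient.mk_smul, Submodule.Quotient.mk_eq_zero] at this
  obtain ⟨p, hmonic, -, hcoeff, heval⟩ :=
    LinearMap.exists_monic_and_natDegree_eq_and_coeff_mem_pow_and_aeval_eq_zero R
      (a • LinearMap.id) I hrange
  set d := p.natDegree with hd
  refine ⟨d, ?_⟩
  have hann : p.eval a ∈ Module.annihilator R M := by
    rw [Module.mem_annihilator]
    intro m
    have h1 : (a • (LinearMap.id : M →ₗ[R] M)) = algebraMap R (Module.End R M) a := by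
      ext m; simp [Module.algebraMap_end_apply]
    rw [h1, Polynomial.aeval_algebraMap_apply] at heval
    have := congrArg (fun φ : Module.End R M => φ m) heval
    simpa [Module.algebraMap_end_apply] using this
  have hsum : p.eval a - a ^ d ∈ (I : Ideal R) := by
    rw [Polynomial.eval_eq_sum_range, Finset.sum_range_succ, ← hd,
      hmonic.coeff_natDegree, one_mul, add_sub_cancel_right]
    refine Ideal.sum_mem _ (fun i hi => ?_)
    have hi' : i < d := Finset.mem_range.1 hi
    have : p.coeff i ∈ I ^ (d - i) := hcoeff i
    have hle : (I ^ (d - i) : Ideal R) ≤ I := Ideal.pow_le_self (Nat.sub_ne_zero_of_lt hi')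
    exact Ideal.mul_mem_right _ _ (hle this)
  have : a ^ d = p.eval a - (p.eval a - a ^ d) := by ring
  rw [this]
  exact Submodule.sub_mem _ (Submodule.mem_sup_right hann) (Submodule.mem_sup_left hsum)


end AuxAlg

section AuxCat
variable {R : Type u} [CommRing R]


lemma smul_id_eq_zero_of_iso {A X : ModuleCat.{u} R} (e : X ≅ A) {a : R}
    (h : (a • 𝟙 A : A ⟶ A) = 0) : (a • 𝟙 X : X ⟶ X) = 0 := by
  have h2 : e.hom ≫ (a • 𝟙 A) ≫ e.inv = a • 𝟙 X := by
    rw [Linear.smul_comp, Linear.comp_smul, Category.id_comp, e.hom_inv_id]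
  rw [← h2, h, zero_comp, comp_zero]

lemma asHom_leftComp_comp {X Y Z B : ModuleCat.{u} R} (f : X ⟶ Y) (g : Y ⟶ Z) :
    ModuleCat.ofHom (Linear.leftComp R B g) ≫ ModuleCat.ofHom (Linear.leftComp R B f) =
      ModuleCat.ofHom (Linear.leftComp R B (f ≫ g)) := by
  apply ModuleCat.hom_ext
  apply LinearMap.ext
  intro φ
  show f ≫ g ≫ φ = (f ≫ g) ≫ φ
  rw [Category.assoc]

lemma asHom_leftComp_add {X Y B : ModuleCat.{u} R} (f g : X ⟶ Y) :
    ModuleCat.ofHom (Linear.leftComp R B (f + g)) =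
      ModuleCat.ofHom (Linear.leftComp R B f) + ModuleCat.ofHom (Linear.leftComp R B g) := by
  apply ModuleCat.hom_ext
  apply LinearMap.ext
  intro φ
  show (f + g) ≫ φ = f ≫ φ + g ≫ φ
  rw [Preadditive.add_comp]

lemma asHom_leftComp_smul_id {X B : ModuleCat.{u} R} (a : R) :
    ModuleCat.ofHom (Linear.leftComp R B (a • 𝟙 X)) = a • 𝟙 (ModuleCat.of R (X ⟶ B)) := by
  apply ModuleCat.hom_ext
  apply LinearMap.ext
  intro φ
  show (a • 𝟙 X) ≫ φ = a • φ
  rw [Linear.smul_comp, Category.id_comp]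

/-- If `a` annihilates `A`, then `a` annihilates `Ext^n(A, B)`. -/
lemma ext_smul_id_eq_zero (A B : ModuleCat.{u} R) (n : ℕ) {a : R}
    (hA : (a • 𝟙 A : A ⟶ A) = 0) :
    (a • 𝟙 (((Ext R (ModuleCat.{u} R) n).obj (op A)).obj B)) = 0 := by
  obtain ⟨P⟩ := (inferInstance : HasProjectiveResolution A).out
  set K := P.complex.linearYonedaObj R B with hK
  -- `a • 𝟙` on the resolution is null-homotopic
  have hπ : (a • 𝟙 P.complex) ≫ P.π = 0 := by
    rw [Linear.smul_comp, Category.id_comp]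
    apply HomologicalComplex.hom_ext
    intro i
    match i with
    | 0 =>
      show a • (P.π.f 0) = _
      have h1 : P.π.f 0 ≫ (a • 𝟙 (((ChainComplex.single₀ (ModuleCat.{u} R)).obj A).X 0)) =
          a • P.π.f 0 := by rw [Linear.comp_smul, Category.comp_id]
      rw [← h1]
      have h0 : (a • 𝟙 (((ChainComplex.single₀ (ModuleCat.{u} R)).obj A).X 0)) = 0 := hA
      rw [h0, comp_zero]
      rfl
    | (i+1) =>
      exact (HomologicalComplex.isZero_single_obj_X (ComplexShape.down ℕ) 0 A (i+1)
        (by simp)).eq_of_tgt _ _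
  have h0 : Homotopy (a • 𝟙 P.complex) 0 := ProjectiveResolution.liftHomotopyZero _ hπ
  -- transfer the homotopy to the Hom-complex `K`
  have hKhtpy : Homotopy (a • 𝟙 K) (0 : K ⟶ K) := by
    refine ⟨fun i j => show K.X i ⟶ K.X j from ModuleCat.ofHom (Linear.leftComp R B (h0.hom j i)),
      fun i j hij => ?_,
      fun i => ?_⟩
    · show ModuleCat.ofHom (Linear.leftComp R B (h0.hom j i)) = 0
      rw [h0.zero j i hij]
      apply ModuleCat.hom_ext
      apply LinearMap.ext
      intro φ
      show (0 : P.complex.X j ⟶ P.complex.X i) ≫ φ = (0 : K.X i ⟶ K.X j).hom φ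
      rw [zero_comp]
      rfl
    · have hP := h0.comm i
      rw [dNext_nat _ _ i _, prevD_eq h0.hom
        (show (ComplexShape.down ℕ).Rel (i+1) i by simp)] at hP
      have hPf : (a • 𝟙 P.complex).f i = a • 𝟙 (P.complex.X i) := by simp
      have hPzero : (0 : P.complex ⟶ P.complex).f i = 0 := rfl
      rw [hPf, hPzero, add_zero] at hP
      -- now the K-side
      rw [dNext_eq _ (show (ComplexShape.up ℕ).Rel i (i+1) by simp), prevD_nat]
      dsimp only
      have hKf : (a • 𝟙 K).f i = a • 𝟙 (K.X i) := by simp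
      have hKzero : (0 : K ⟶ K).f i = 0 := rfl
      rw [hKf, hKzero, add_zero]
      show a • 𝟙 (ModuleCat.of R (P.complex.X i ⟶ B)) =
        ModuleCat.ofHom (Linear.leftComp R B (P.complex.d (i+1) i)) ≫
          ModuleCat.ofHom (Linear.leftComp R B (h0.hom i (i+1))) +
        ModuleCat.ofHom (Linear.leftComp R B (h0.hom (i-1) i)) ≫
          ModuleCat.ofHom (Linear.leftComp R B (P.complex.d i (i-1)))
      rw [asHom_leftComp_comp, asHom_leftComp_comp, ← asHom_leftComp_add]
      rw [add_comm] at hP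
      rw [← hP, asHom_leftComp_smul_id]
  -- `a • 𝟙` vanishes on homology of `K`
  have hhom : (a • 𝟙 (K.homology n)) = 0 := by
    have h1 : (HomologicalComplex.shortComplexFunctor (ModuleCat.{u} R)
        (ComplexShape.up ℕ) n).map (a • 𝟙 K) = a • 𝟙 (K.sc n) := by
      ext <;> simp <;> rfl
    have h2 : HomologicalComplex.homologyMap (a • 𝟙 K) n = a • 𝟙 (K.homology n) := by
      rw [HomologicalComplex.homologyMap, h1, ShortComplex.homologyMap_smul,
        ShortComplex.homologyMap_id]
      rfl
    rw [← h2, hKhtpy.homologyMap_eq n, HomologicalComplex.homologyMap_zero]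
  exact smul_id_eq_zero_of_iso (P.isoExt n B) hhom

end AuxCat

section AuxColim
variable (R : Type u) [CommRing R]

lemma genLocalCohomology_smul_id (I : Ideal R) (M N : Type u) [AddCommGroup M] [Module R M]
    [AddCommGroup N] [Module R N] (t : ℕ) {a : R} (ha : a ∈ Module.annihilator R M) :
    (a • 𝟙 (genLocalCohomology R I M N t)) = 0 := by
  set D := (modIdealPowersDiagram R I M).op ⋙ Ext R (ModuleCat.{u} R) t ⋙
    (evaluation (ModuleCat.{u} R) (ModuleCat.{u} R)).obj (ModuleCat.of R N) with hD
  show (a • 𝟙 (colimit D)) = 0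
  apply colimit.hom_ext
  intro j
  rw [Linear.comp_smul, Category.comp_id, comp_zero]
  have hA : (a • 𝟙 (ModuleCat.of R (M ⧸ (I ^ (unop (unop j)) • ⊤ : Submodule R M)))) = 0 := by
    apply ModuleCat.hom_ext
    apply LinearMap.ext
    intro x
    simp only [ModuleCat.hom_smul, ModuleCat.hom_zero, LinearMap.smul_apply, ModuleCat.id_apply,
      LinearMap.zero_apply]
    obtain ⟨m, rfl⟩ := Submodule.Quotient.mk_surjective _ x
    show a • (Submodule.Quotient.mk m : M ⧸ (I ^ (unop (unop j)) • ⊤ : Submodule R M)) = 0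
    rw [← Submodule.Quotient.mk_smul, Module.mem_annihilator.1 ha m]
    rfl
  have h1 : (a • 𝟙 (D.obj j)) = 0 :=
    ext_smul_id_eq_zero (ModuleCat.of R (M ⧸ (I ^ (unop (unop j)) • ⊤ : Submodule R M)))
      (ModuleCat.of R N) t hA
  have h2 : (a • 𝟙 (D.obj j)) ≫ colimit.ι D j = a • colimit.ι D j := by
    rw [Linear.smul_comp, Category.id_comp]
  rw [← h2, h1, zero_comp]

lemma genLocalCohomology_smul_eq_zero (I : Ideal R) (M N : Type u) [AddCommGroup M] [Module R M]
    [AddCommGroup N] [Module R N] (t : ℕ) {a : R} (ha : a ∈ Module.annihilator R M)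
    (x : ↑(genLocalCohomology R I M N t)) : a • x = 0 := by
  have h := genLocalCohomology_smul_id R I M N t ha
  have := LinearMap.congr_fun (congrArg ModuleCat.Hom.hom h) x
  exact this

end AuxColim

/-- `Hom_R(R/I, H^t_I(M,N))` is finitely generated iff `Hom_R(R/I_M, H^t_I(M,N))` is. -/
theorem stmt14 [IsNoetherianRing R] (I : Ideal R) (M N : Type u)
    [AddCommGroup M] [Module R M] [Module.Finite R M]
    [AddCommGroup N] [Module R N] [Module.Finite R N] (t : ℕ) :
    Module.Finite R ((R ⧸ I) →ₗ[R] (genLocalCohomology R I M N t)) ↔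
      Module.Finite R ((R ⧸ idealAnnQuot R I M) →ₗ[R] (genLocalCohomology R I M N t)) := by
  classical
  set J := idealAnnQuot R I M with hJdef
  have key : ∀ a ∈ Module.annihilator R M, ∀ x : ↑(genLocalCohomology R I M N t), a • x = 0 :=
    fun a ha x => genLocalCohomology_smul_eq_zero R I M N t ha x
  have hIJ : I ≤ J := by
    intro a haI
    refine Module.mem_annihilator.2 (fun m' => ?_)
    obtain ⟨m, rfl⟩ := Submodule.Quotient.mk_surjective _ m'
    rw [← Submodule.Quotient.mk_smul, Submodule.Quotient.mk_eq_zero]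
    exact Submodule.smul_mem_smul haI Submodule.mem_top
  have hrad : J ≤ (I ⊔ Module.annihilator R M).radical := by
    intro a ha
    exact annQuot_le_radical I ha
  obtain ⟨n, hn⟩ := Ideal.exists_pow_le_of_le_radical_of_fg hrad (IsNoetherian.noetherian J)
  have crit : ∀ K : Ideal R, Module.Finite R ((R ⧸ K) →ₗ[R] (genLocalCohomology R I M N t)) ↔
      (Submodule.torsionBySet R (genLocalCohomology R I M N t) (K : Set R)).FG := by
    intro K
    constructor
    · intro h
      exact Module.Finite.iff_fg.1 (Module.Finite.equiv (homQuotEquivTorsion K _))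
    · intro h
      have : Module.Finite R (Submodule.torsionBySet R (genLocalCohomology R I M N t)
          (K : Set R)) := Module.Finite.iff_fg.2 h
      exact Module.Finite.equiv (homQuotEquivTorsion K _).symm
  rw [crit I, crit J]
  constructor
  · intro h
    refine fg_of_le_fg h ?_
    intro x hx
    refine (Submodule.mem_torsionBySet_iff _ _).2 (fun b => ?_)
    exact (Submodule.mem_torsionBySet_iff _ _).1 hx ⟨(b : R), hIJ b.2⟩
  · intro h
    have hpow := torsionBySet_pow_fg J h n
    refine fg_of_le_fg hpow ?_
    intro x hx
    refine (Submodule.mem_torsionBySet_iff _ _).2 (fun b => ?_)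
    obtain ⟨y, hy, z, hz, hyz⟩ := Submodule.mem_sup.1 (hn b.2)
    have h1 : y • x = 0 := (Submodule.mem_torsionBySet_iff _ _).1 hx ⟨y, hy⟩
    have h2 : z • x = 0 := key z hz x
    rw [← hyz, add_smul, h1, h2, add_zero]


end
end
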